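/- The pair (x̄,ū) given by x̄(t)=(cos t, sin t) and ū(t)=t is admissible (with multiplier ξ̄(t)≡1/6) and is a global optimal solution of the problem: g(x̄(0),x̄(π/2)) = 0 ≤ g(x(0),x(π/2)) for every admissible pair (x,u). -/

import Mathlib

open Real Set MeasureTheory intervalIntegral

noncomputable section

/-- `ψ(x₁,x₂) = (x₁²+x₂²−1)(x₁²+x₂²−4)`; the constraint set is `C = {ψ ≤ 0}`. -/
def ψex : ℝ × ℝ → ℝ := fun p => (p.1 ^ 2 + p.2 ^ 2 - 1) * (p.1 ^ 2 + p.2 ^ 2 - 4)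

/-- `∇ψ(x) = (4(x₁²+x₂²)−10)·(x₁,x₂)`. -/
def gradψex : ℝ × ℝ → ℝ × ℝ := fun p => (4 * (p.1 ^ 2 + p.2 ^ 2) - 10) • p

/-- The nonautonomous perturbation `f(t,(x₁,x₂),u) = (t−x₁−x₂−u, −t+x₁−x₂+u)`. -/
def fex : ℝ → ℝ × ℝ → ℝ → ℝ × ℝ := fun t p u => (t - p.1 - p.2 - u, -t + p.1 - p.2 + u)

/-- The cost `g(a,b) = ½(b₁²+b₂²−1)` if `b ∈ C`, and `+∞` otherwise. -/
def gex : ℝ × ℝ → ℝ × ℝ → EReal := fun _ b =>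
  if ψex b ≤ 0 then ((1 / 2 * (b.1 ^ 2 + b.2 ^ 2 - 1) : ℝ) : EReal) else ⊤

/-- `(x, u, ξ)` satisfies the sweeping dynamics of the example on `[0, π/2]`:
`ξ` is a bounded nonnegative measurable multiplier vanishing a.e. where `ψ(x(t)) < 0`,
and `ẋ(t) = f(t,x(t),u(t)) − ξ(t)∇ψ(x(t))` a.e. (in integral form). -/
def SweepEx (x : ℝ → ℝ × ℝ) (u ξ : ℝ → ℝ) : Prop :=
  Measurable ξ ∧
  (∃ K : ℝ, ∀ᵐ t ∂(volume.restrict (Icc (0:ℝ) (π / 2))), 0 ≤ ξ t ∧ ξ t ≤ K) ∧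
  (∀ᵐ t ∂(volume.restrict (Icc (0:ℝ) (π / 2))), ψex (x t) < 0 → ξ t = 0) ∧
  IntervalIntegrable (fun s => fex s (x s) (u s) - ξ s • gradψex (x s)) volume 0 (π / 2) ∧
  (∀ t ∈ Icc (0:ℝ) (π / 2),
    x t = x 0 + ∫ s in (0:ℝ)..t, (fex s (x s) (u s) - ξ s • gradψex (x s)))

/-- `(x,u)` is admissible for the example problem: `x` absolutely continuous solving the
sweeping inclusion for some multiplier `ξ`, `u ∈ W^{1,2}` with `u(t) ∈ U(t) = [t,π]`,
`x(0) ∈ C₀ = {(1,0)}`, `x(π/2) ∈ C₁ = {0} × [0,∞)`, and `x(t) ∈ C` for all `t`. -/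
def AdmissibleEx (x : ℝ → ℝ × ℝ) (u : ℝ → ℝ) : Prop :=
  x 0 = ((1:ℝ), (0:ℝ)) ∧
  ((x (π / 2)).1 = 0 ∧ 0 ≤ (x (π / 2)).2) ∧
  (∀ t ∈ Icc (0:ℝ) (π / 2), ψex (x t) ≤ 0) ∧
  (∀ t ∈ Icc (0:ℝ) (π / 2), u t ∈ Icc t π) ∧
  (∃ u' : ℝ → ℝ, MemLp u' 2 (volume.restrict (Icc (0:ℝ) (π / 2))) ∧
    ∀ t ∈ Icc (0:ℝ) (π / 2), u t = u 0 + ∫ s in (0:ℝ)..t, u' s) ∧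
  ∃ ξ : ℝ → ℝ, SweepEx x u ξ

lemma stmt8_integrand_eq (s : ℝ) :
    fex s (Real.cos s, Real.sin s) s - ((1:ℝ)/6) • gradψex (Real.cos s, Real.sin s)
      = (-Real.sin s, Real.cos s) := by
  have h := sin_sq_add_cos_sq s
  simp only [fex, gradψex, Prod.smul_mk, smul_eq_mul, Prod.mk_sub_mk]
  rw [Prod.ext_iff]
  refine ⟨?_, ?_⟩
  · dsimp; linear_combination (-(2:ℝ)/3 * Real.cos s) * h
  · dsimp; linear_combination (-(2:ℝ)/3 * Real.sin s) * h

lemma stmt8_integral_eq (t : ℝ) : (∫ s in (0:ℝ)..t, ((-Real.sin s, Real.cos s) : ℝ × ℝ))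
    = (Real.cos t - 1, Real.sin t) := by
  have : (∫ s in (0:ℝ)..t, ((-Real.sin s, Real.cos s) : ℝ × ℝ))
      = (Real.cos t, Real.sin t) - (Real.cos 0, Real.sin 0) := by
    apply intervalIntegral.integral_eq_sub_of_hasDerivAt
    · intro s _
      exact ((Real.hasDerivAt_cos s).prodMk (Real.hasDerivAt_sin s))
    · exact (Continuous.intervalIntegrable (by continuity) 0 t)
  simp [this, Prod.ext_iff]

lemma stmt8_psi_zero (t : ℝ) : ψex (Real.cos t, Real.sin t) = 0 := by
  have h := sin_sq_add_cos_sq t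
  simp only [ψex]
  nlinarith

/-- The pair `x̄(t) = (cos t, sin t)`, `ū(t) = t` is admissible for the
example, with constant multiplier `ξ̄ ≡ 1/6`, and it is a global optimal solution:
`g(x̄(0), x̄(π/2)) = 0 ≤ g(x(0), x(π/2))` for every admissible pair `(x,u)`. -/
theorem stmt8 :
    AdmissibleEx (fun t => (Real.cos t, Real.sin t)) (fun t => t) ∧
    SweepEx (fun t => (Real.cos t, Real.sin t)) (fun t => t) (fun _ => 1 / 6) ∧
    gex ((fun t => (Real.cos t, Real.sin t)) 0) ((fun t => (Real.cos t, Real.sin t)) (π / 2))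
      = (0 : EReal) ∧
    ∀ x u, AdmissibleEx x u → (0 : EReal) ≤ gex (x 0) (x (π / 2)) := by
  have hsweep : SweepEx (fun t => (Real.cos t, Real.sin t)) (fun t => t) (fun _ => 1 / 6) := by
    refine ⟨measurable_const, ⟨1/6, Filter.Eventually.of_forall fun t => by norm_num⟩,
      Filter.Eventually.of_forall fun t h => absurd h (by simp [stmt8_psi_zero]), ?_, ?_⟩
    · have : (fun s => fex s ((fun t => (Real.cos t, Real.sin t)) s) ((fun t : ℝ => t) s)
          - ((fun _ : ℝ => (1:ℝ)/6) s) • gradψex ((fun t => (Real.cos t, Real.sin t)) s))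
          = fun s => ((-Real.sin s, Real.cos s) : ℝ × ℝ) :=
        funext fun s => stmt8_integrand_eq s
      rw [this]
      exact Continuous.intervalIntegrable (by continuity) _ _
    · intro t ht
      simp only [stmt8_integrand_eq, stmt8_integral_eq]
      simp [Prod.ext_iff]
  refine ⟨?_, hsweep, ?_, ?_⟩
  · refine ⟨by simp, by simp, fun t _ => le_of_eq (stmt8_psi_zero t), ?_, ?_, ⟨_, hsweep⟩⟩
    · intro t ht
      exact ⟨le_refl t, le_trans ht.2 (by linarith [pi_pos])⟩
    · refine ⟨fun _ => 1, memLp_const 1, fun t ht => by simp⟩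
  · simp [gex, ψex]
  · rintro x u ⟨h0, ⟨h1, h2⟩, hC, -, -, -⟩
    have h3 := hC (π/2) ⟨by positivity, le_refl _⟩
    simp only [gex, if_pos h3]
    have hb : 1 ≤ (x (π/2)).2 ^ 2 := by
      simp only [ψex, h1] at h3
      nlinarith
    have : (0:ℝ) ≤ 1 / 2 * ((x (π/2)).1 ^ 2 + (x (π/2)).2 ^ 2 - 1) := by
      rw [h1]; nlinarith
    exact_mod_cast EReal.coe_nonneg.mpr this

end
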